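/- Let C be a compact Hermitian operator and D₁ a compact real diagonal operator on a separable Hilbert space such that C + D₁ is minimal (‖C+D₁‖ ≤ ‖C+D‖ for all compact real diagonal D) and C+D₁ ≠ 0. Then λ_min(C+D₁) + λ_max(C+D₁) = 0. -/

import Mathlib

open scoped InnerProductSpace
open ContinuousLinearMap
open scoped Pointwise
set_option linter.unusedSectionVars false
set_option linter.unusedVariables false
set_option maxHeartbeats 1000000

noncomputable section

variable {H : Type*} [NormedAddCommGroup H] [InnerProductSpace ℂ H] [CompleteSpace H]

/-- The absolute value `|A| = (A^*A)^{1/2}` of an operator. -/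
def opAbs (A : H →L[ℂ] H) : H →L[ℂ] H := CFC.sqrt (ContinuousLinearMap.adjoint A * A)

/-- The trace of an operator computed in the Hilbert basis `e`. -/
def opTrace (e : HilbertBasis ℕ ℂ H) (A : H →L[ℂ] H) : ℂ := ∑' n, ⟪e n, A (e n)⟫_ℂ

/-- The trace norm `‖A‖₁ = tr |A|` computed in the Hilbert basis `e`. -/
def traceNorm (e : HilbertBasis ℕ ℂ H) (A : H →L[ℂ] H) : ℝ :=
  ∑' n, (⟪e n, opAbs A (e n)⟫_ℂ).re

/-- `A` is trace class: the diagonal of `|A|` is summable. -/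
def IsTraceClass (e : HilbertBasis ℕ ℂ H) (A : H →L[ℂ] H) : Prop :=
  Summable fun n => (⟪e n, opAbs A (e n)⟫_ℂ).re

/-- `D` is diagonal in the basis `e` with real diagonal entries. -/
def RealDiag (e : HilbertBasis ℕ ℂ H) (D : H →L[ℂ] H) : Prop :=
  ∀ n, ∃ d : ℝ, D (e n) = (d : ℂ) • e n

/-- Distance from `C` to the compact real diagonal operators, in operator norm. -/
def diagDistK (e : HilbertBasis ℕ ℂ H) (C : H →L[ℂ] H) : ℝ :=
  ⨅ D : {D : H →L[ℂ] H // IsCompactOperator ⇑D ∧ RealDiag e D}, ‖C + (D : H →L[ℂ] H)‖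

/-- Positive part `X⁺ = (|X| + X)/2`. -/
def opPosPart (X : H →L[ℂ] H) : H →L[ℂ] H := (2⁻¹ : ℂ) • (opAbs X + X)

/-- Negative part `X⁻ = (|X| - X)/2`. -/
def opNegPart (X : H →L[ℂ] H) : H →L[ℂ] H := (2⁻¹ : ℂ) • (opAbs X - X)


namespace Stmt17Aux

variable (e : HilbertBasis ℕ ℂ H)


variable (e : HilbertBasis ℕ ℂ H)

def UN (N : ℕ) : Submodule ℂ H := Submodule.span ℂ (⇑e '' Set.Iio N)

instance (N : ℕ) : FiniteDimensional ℂ (UN e N) :=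
  FiniteDimensional.span_of_finite ℂ ((Set.finite_Iio N).image ⇑e)

def PN (N : ℕ) : H →L[ℂ] H :=
  (UN e N).subtypeL ∘L Submodule.orthogonalProjectionOnto (UN e N)

lemma pn_apply_lt {N m : ℕ} (h : m < N) : PN e N (e m) = e m := by
  have hm : e m ∈ UN e N := Submodule.subset_span ⟨m, h, rfl⟩
  exact Submodule.starProjection_eq_self_iff.mpr hm

lemma pn_apply_ge {N m : ℕ} (h : N ≤ m) : PN e N (e m) = 0 := by
  have hm : e m ∈ (UN e N)ᗮ := by
    rw [Submodule.mem_orthogonal]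
    intro u hu
    induction hu using Submodule.span_induction with
    | mem x hx =>
        obtain ⟨i, hi, rfl⟩ := hx
        have hiN : i < N := hi
        have := orthonormal_iff_ite.mp e.orthonormal i m
        rw [this, if_neg (by omega)]
    | zero => simp
    | add x y hx hy ihx ihy => simp [inner_add_left, ihx, ihy]
    | smul a x hx ihx => simp [inner_smul_left, ihx]
  simp [PN, Submodule.orthogonalProjectionOnto_apply_of_mem_orthogonal hm]

lemma pn_norm_le (N : ℕ) (x : H) : ‖PN e N x‖ ≤ ‖x‖ := by
  have h1 : ‖PN e N x‖ = ‖Submodule.orthogonalProjectionOnto (UN e N) x‖ := rfl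
  rw [h1]
  calc ‖Submodule.orthogonalProjectionOnto (UN e N) x‖ ≤ ‖Submodule.orthogonalProjectionOnto (UN e N)‖ * ‖x‖ :=
        (Submodule.orthogonalProjectionOnto (UN e N)).le_opNorm x
    _ ≤ 1 * ‖x‖ := by
        have := Submodule.orthogonalProjectionOnto_norm_le (UN e N)
        gcongr
    _ = ‖x‖ := one_mul _

lemma pn_sub_norm_le (N : ℕ) (x : H) : ‖x - PN e N x‖ ≤ ‖x‖ := by
  have hmem : PN e N x ∈ UN e N := Submodule.coe_mem (Submodule.orthogonalProjectionOnto (UN e N) x)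
  have h0' : (⟪x - PN e N x, (PN e N x : H)⟫_ℂ) = 0 :=
    Submodule.starProjection_inner_eq_zero x (PN e N x) hmem
  have h0 : (⟪(PN e N x : H), x - PN e N x⟫_ℂ) = 0 := by
    rw [← inner_conj_symm, h0', map_zero]
  have hpyth := norm_add_sq_eq_norm_sq_add_norm_sq_of_inner_eq_zero _ _ h0
  have hsum : PN e N x + (x - PN e N x) = x := by abel
  rw [hsum] at hpyth
  nlinarith [norm_nonneg (PN e N x), norm_nonneg (x - PN e N x), norm_nonneg x]


lemma pn_idem (N : ℕ) : PN e N * PN e N = PN e N := by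
  ext x
  have hmem : PN e N x ∈ UN e N := Submodule.coe_mem (Submodule.orthogonalProjectionOnto (UN e N) x)
  show PN e N (PN e N x) = PN e N x
  exact Submodule.starProjection_eq_self_iff.mpr hmem

lemma pn_sa (N : ℕ) : IsSelfAdjoint (PN e N) :=
  isSelfAdjoint_starProjection (UN e N)

lemma pn_compact (N : ℕ) : IsCompactOperator ⇑(PN e N) := by
  refine ⟨(UN e N).subtypeL '' Metric.closedBall 0 1, ?_, ?_⟩
  · exact ((ProperSpace.isCompact_closedBall (0 : UN e N) 1)).image (UN e N).subtypeL.continuous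
  · refine Filter.mem_of_superset (Metric.ball_mem_nhds 0 one_pos) ?_
    intro x hx
    refine ⟨Submodule.orthogonalProjectionOnto (UN e N) x, ?_, rfl⟩
    rw [Metric.mem_closedBall, dist_zero_right]
    calc ‖Submodule.orthogonalProjectionOnto (UN e N) x‖ ≤ 1 * ‖x‖ := by
          have := Submodule.orthogonalProjectionOnto_norm_le (UN e N)
          calc ‖Submodule.orthogonalProjectionOnto (UN e N) x‖ ≤ ‖Submodule.orthogonalProjectionOnto (UN e N)‖ * ‖x‖ :=
                (Submodule.orthogonalProjectionOnto (UN e N)).le_opNorm x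
            _ ≤ 1 * ‖x‖ := by gcongr
      _ ≤ 1 := by
          rw [one_mul]
          exact le_of_lt (by simpa using hx)

lemma pn_eq_sum (N : ℕ) (x : H) :
    PN e N x = ∑ i ∈ Finset.range N, (⟪e i, x⟫_ℂ) • e i := by
  set S := ∑ i ∈ Finset.range N, (⟪e i, x⟫_ℂ) • e i with hS
  have hSmem : S ∈ UN e N := by
    refine Submodule.sum_mem _ fun i hi => Submodule.smul_mem _ _ ?_
    exact Submodule.subset_span ⟨i, Finset.mem_range.mp hi, rfl⟩
  have horth : x - S ∈ (UN e N)ᗮ := by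
    rw [Submodule.mem_orthogonal']
    intro u hu
    induction hu using Submodule.span_induction with
    | mem u hu =>
        obtain ⟨i, hi, rfl⟩ := hu
        have hiN : i < N := hi
        rw [inner_sub_left, hS, sum_inner]
        rw [Finset.sum_eq_single i]
        · simp [inner_smul_left, orthonormal_iff_ite.mp e.orthonormal i i, inner_conj_symm, e.orthonormal.1 i]
        · intro j hj hji
          simp [inner_smul_left, orthonormal_iff_ite.mp e.orthonormal j i, hji]
        · intro h; exact absurd (Finset.mem_range.mpr hiN) h
    | zero => simp
    | add u v hu hv ihu ihv => simp [inner_add_right, ihu, ihv]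
    | smul a u hu ihu => simp [inner_smul_right, ihu]
  have := Submodule.eq_starProjection_of_mem_of_inner_eq_zero (K := UN e N) (u := x) hSmem
    (fun w hw => (Submodule.mem_orthogonal' _ _).mp horth w hw)
  show (UN e N).starProjection x = S
  rw [this]

lemma pn_tendsto (x : H) :
    Filter.Tendsto (fun N => PN e N x) Filter.atTop (nhds x) := by
  have h := (e.hasSum_repr x).tendsto_sum_nat
  have hfun : (fun N => PN e N x) = fun N => ∑ i ∈ Finset.range N, e.repr x i • e i := by
    funext N
    rw [pn_eq_sum]
    congr 1
    funext i
    rw [e.repr_apply_apply]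
  rw [hfun]
  exact h

lemma qn_small (B : H →L[ℂ] H) (hB : IsCompactOperator ⇑B) {ε : ℝ} (hε : 0 < ε) :
    ∃ N, ‖(1 - PN e N) * B‖ ≤ ε := by
  obtain ⟨K, hK, hBK⟩ := hB.image_closedBall_subset_compact 1
  obtain ⟨t, htfin, htcov⟩ := (Metric.totallyBounded_iff).mp hK.totallyBounded (ε/2) (by positivity)
  have hev : ∀ᶠ N in Filter.atTop, ∀ y ∈ t, dist (PN e N y) y < ε/2 := by
    rw [Set.Finite.eventually_all htfin]
    intro y hy
    refine (pn_tendsto e y).eventually (p := fun z => dist z y < ε/2) ?_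
    filter_upwards [Metric.ball_mem_nhds y (by positivity : (0:ℝ) < ε/2)] with z hz
    exact Metric.mem_ball.mp hz
  obtain ⟨N, hN⟩ := hev.exists
  refine ⟨N, ?_⟩
  have hb1 : ∀ x : H, ‖x‖ ≤ 1 → ‖B x - PN e N (B x)‖ ≤ ε := by
    intro x hx
    have hBx : B x ∈ K := hBK ⟨x, Metric.mem_closedBall.mpr (by simpa using hx), rfl⟩
    obtain ⟨y, hy, hxy⟩ := Set.mem_iUnion₂.mp (htcov hBx)
    have hxy' : ‖B x - y‖ < ε/2 := by
      rw [← dist_eq_norm]; exact Metric.mem_ball.mp hxy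
    have hyN : ‖y - PN e N y‖ < ε/2 := by
      rw [← dist_eq_norm, dist_comm]; exact hN y hy
    have hsplit : B x - PN e N (B x) = ((B x - y) - PN e N (B x - y)) + (y - PN e N y) := by
      rw [map_sub]; abel
    rw [hsplit]
    calc ‖((B x - y) - PN e N (B x - y)) + (y - PN e N y)‖
        ≤ ‖(B x - y) - PN e N (B x - y)‖ + ‖y - PN e N y‖ := norm_add_le _ _
      _ ≤ ‖B x - y‖ + ‖y - PN e N y‖ := by gcongr; exact pn_sub_norm_le e N _
      _ ≤ ε := by linarith
  refine ContinuousLinearMap.opNorm_le_bound _ hε.le ?_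
  intro x
  rcases eq_or_ne x 0 with rfl | hx0
  · simp
  · have hxpos : 0 < ‖x‖ := norm_pos_iff.mpr hx0
    set u : H := (‖x‖)⁻¹ • x with hu
    have hunorm : ‖u‖ ≤ 1 := by
      rw [hu, norm_smul, norm_inv, norm_norm]
      rw [inv_mul_cancel₀ hxpos.ne']
    have hxu : x = ‖x‖ • u := by
      rw [hu, smul_smul, mul_inv_cancel₀ hxpos.ne', one_smul]
    have happ : ((1 - PN e N) * B) x = ‖x‖ • (((1 - PN e N) * B) u) := by
      conv_lhs => rw [hxu]
      exact ((1 - PN e N) * B).map_smul_of_tower _ _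
    rw [happ, norm_smul, norm_norm]
    have : ‖((1 - PN e N) * B) u‖ ≤ ε := by
      have : ((1 - PN e N) * B) u = B u - PN e N (B u) := by
        simp [mul_apply, sub_apply, one_apply]
      rw [this]; exact hb1 u hunorm
    calc ‖x‖ * ‖((1 - PN e N) * B) u‖ ≤ ‖x‖ * ε := by gcongr
      _ = ε * ‖x‖ := mul_comm _ _

lemma hb_dense : Dense ((Submodule.span ℂ (Set.range ⇑e) : Submodule ℂ H) : Set H) :=
  Submodule.dense_iff_topologicalClosure_eq_top.mpr e.dense_span

lemma realdiag_sa {D : H →L[ℂ] H} (hD : ∀ n, ∃ d : ℝ, D (e n) = (d : ℂ) • e n) :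
    IsSelfAdjoint D := by
  rw [ContinuousLinearMap.isSelfAdjoint_iff']
  refine ContinuousLinearMap.ext_on (hb_dense e) ?_
  rintro _ ⟨n, rfl⟩
  obtain ⟨d, hd⟩ := hD n
  rw [hd]
  refine ext_inner_right ℂ fun v => ?_
  rw [ContinuousLinearMap.adjoint_inner_left, inner_smul_left, Complex.conj_ofReal]
  have key : (innerSL ℂ (e n)).comp D = (d : ℂ) • innerSL ℂ (e n) := by
    refine ContinuousLinearMap.ext_on (hb_dense e) ?_
    rintro _ ⟨m, rfl⟩
    obtain ⟨dm, hdm⟩ := hD m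
    simp only [ContinuousLinearMap.comp_apply, ContinuousLinearMap.smul_apply, innerSL_apply_apply, hdm]
    rw [inner_smul_right]
    rcases eq_or_ne n m with rfl | hnm
    · rw [hd] at hdm
      have hen : e n ≠ 0 := by
        intro hzero
        have := e.orthonormal.1 n
        rw [hzero] at this; simp at this
      have : (d : ℂ) = dm := smul_left_injective ℂ hen hdm
      rw [this, smul_eq_mul]
    · rw [orthonormal_iff_ite.mp e.orthonormal n m, if_neg hnm]
      simp
  have := DFunLike.congr_fun key v
  simp only [ContinuousLinearMap.comp_apply, ContinuousLinearMap.smul_apply, innerSL_apply_apply,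
    smul_eq_mul] at this
  rw [this]

lemma clm_nontrivial [Nontrivial H] : Nontrivial (H →L[ℂ] H) := by
  obtain ⟨x, hx⟩ := exists_ne (0 : H)
  exact ⟨1, 0, fun h => hx (by simpa using DFunLike.congr_fun h x)⟩

lemma norm_le_max [Nontrivial H] {a : H →L[ℂ] H} (ha : IsSelfAdjoint a) :
    ‖a‖ ≤ max (sSup (spectrum ℝ a)) (-sInf (spectrum ℝ a)) := by
  haveI := clm_nontrivial (H := H)
  rcases CStarAlgebra.norm_or_neg_norm_mem_spectrum ha with h | h
  · exact le_max_of_le_left (le_csSup (spectrum.isCompact a).bddAbove h)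
  · have := csInf_le (spectrum.isCompact a).bddBelow h
    exact le_max_of_le_right (by linarith)

lemma sSup_le_norm [Nontrivial H] {a : H →L[ℂ] H} (ha : IsSelfAdjoint a) :
    sSup (spectrum ℝ a) ≤ ‖a‖ := by
  haveI := clm_nontrivial (H := H)
  have hne : (spectrum ℝ a).Nonempty := ha.spectrum_nonempty
  have hmem : sSup (spectrum ℝ a) ∈ spectrum ℝ a :=
    (spectrum.isCompact a).sSup_mem hne
  have := spectrum.norm_le_norm_of_mem hmem
  rw [Real.norm_eq_abs] at this
  exact (le_abs_self _).trans this

lemma norm_translate_le [Nontrivial H] {a : H →L[ℂ] H} (ha : IsSelfAdjoint a)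
    {t M : ℝ} (hM : 0 ≤ M) (hub : ∀ x ∈ spectrum ℝ a, |x - t| ≤ M) :
    ‖a - (t : ℂ) • 1‖ ≤ M := by
  haveI := clm_nontrivial (H := H)
  have halg : ((t : ℂ) • (1 : H →L[ℂ] H)) = algebraMap ℝ (H →L[ℂ] H) t := by
    rw [IsScalarTower.algebraMap_apply ℝ ℂ (H →L[ℂ] H), Algebra.algebraMap_eq_smul_one]
    norm_num
  have ht1 : IsSelfAdjoint ((t : ℂ) • (1 : H →L[ℂ] H)) := by
    rw [IsSelfAdjoint, star_smul, star_one, Complex.star_def, Complex.conj_ofReal]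
  have ha' : IsSelfAdjoint (a - (t : ℂ) • 1) := ha.sub ht1
  have hspec : spectrum ℝ (a - (t : ℂ) • 1) = spectrum ℝ a - ({t} : Set ℝ) := by
    rw [halg]
    exact (spectrum.sub_singleton_eq a t).symm
  have hub' : ∀ x ∈ spectrum ℝ (a - (t : ℂ) • 1), |x| ≤ M := by
    intro x hx
    rw [hspec] at hx
    obtain ⟨u, hu, v, hv, rfl⟩ := Set.mem_sub.mp hx
    rw [Set.mem_singleton_iff] at hv
    subst hv
    exact hub u hu
  have hne : (spectrum ℝ (a - (t : ℂ) • 1)).Nonempty := ha'.spectrum_nonempty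
  refine (norm_le_max ha').trans (max_le ?_ ?_)
  · exact Real.sSup_le (fun x hx => (le_abs_self x).trans (hub' x hx)) hM
  · have : -M ≤ sInf (spectrum ℝ (a - (t : ℂ) • 1)) :=
      le_csInf hne (fun x hx => by have := hub' x hx; rw [abs_le] at this; linarith [this.1])
    linarith

lemma key (C D₁ : H →L[ℂ] H)
    (hcomp : IsCompactOperator ⇑C) (hsa : IsSelfAdjoint C)
    (hD₁c : IsCompactOperator ⇑D₁) (hD₁ : ∀ n, ∃ d : ℝ, D₁ (e n) = (d : ℂ) • e n)
    (hmin : ∀ D : H →L[ℂ] H, IsCompactOperator ⇑D →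
      (∀ n, ∃ d : ℝ, D (e n) = (d : ℂ) • e n) → ‖C + D₁‖ ≤ ‖C + D‖) :
    sInf (spectrum ℝ (C + D₁)) + sSup (spectrum ℝ (C + D₁)) ≤ 0 := by
  haveI hHnt : Nontrivial H := by
    refine nontrivial_of_ne (e 0) 0 fun h => ?_
    have h1 := e.orthonormal.1 0
    rw [h] at h1; simp at h1
  haveI := clm_nontrivial (H := H)
  by_contra hcon
  push_neg at hcon
  set B := C + D₁ with hB
  have hBsa : IsSelfAdjoint B := hsa.add (realdiag_sa e hD₁)
  have hBc : IsCompactOperator ⇑B := by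
    have := hcomp.add hD₁c
    exact this
  set s := sInf (spectrum ℝ B) with hs
  set S := sSup (spectrum ℝ B) with hS
  set t := (s + S) / 2 with htdef
  have ht : 0 < t := by rw [htdef]; linarith
  have hne : (spectrum ℝ B).Nonempty := hBsa.spectrum_nonempty
  have hbdda : BddAbove (spectrum ℝ B) := (spectrum.isCompact B).bddAbove
  have hbddb : BddBelow (spectrum ℝ B) := (spectrum.isCompact B).bddBelow
  have hsS : s ≤ S := csInf_le_csSup hne hbddb hbdda
  have hSnorm : S ≤ ‖B‖ := sSup_le_norm hBsa
  obtain ⟨N, hQB⟩ := qn_small e B hBc (show (0:ℝ) < t/4 by linarith)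
  set P := PN e N with hPdef
  set Q := (1 : H →L[ℂ] H) - P with hQdef
  have hPsa : IsSelfAdjoint P := pn_sa e N
  have hQsa : IsSelfAdjoint Q := (IsSelfAdjoint.one (R := H →L[ℂ] H)).sub hPsa
  have hPn : ‖P‖ ≤ 1 :=
    ContinuousLinearMap.opNorm_le_bound _ zero_le_one fun x => by
      rw [one_mul]; exact pn_norm_le e N x
  have hQn : ‖Q‖ ≤ 1 :=
    ContinuousLinearMap.opNorm_le_bound _ zero_le_one fun x => by
      rw [one_mul]
      simpa [hQdef, ContinuousLinearMap.sub_apply] using pn_sub_norm_le e N x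
  have hBQ : ‖B * Q‖ ≤ t/4 := by
    have hst : B * Q = star (Q * B) := by rw [star_mul, hBsa.star_eq, hQsa.star_eq]
    rw [hst, norm_star]; exact hQB
  -- the competitor
  have hDc : IsCompactOperator ⇑(D₁ - (t : ℂ) • P) := by
    have h1 : IsCompactOperator ((t : ℂ) • ⇑P) := (pn_compact e N).smul ((t : ℂ))
    exact hD₁c.sub h1
  have hDd : ∀ n, ∃ d : ℝ, (D₁ - (t : ℂ) • P) (e n) = (d : ℂ) • e n := by
    intro n
    obtain ⟨d, hd⟩ := hD₁ n
    by_cases hn : n < N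
    · refine ⟨d - t, ?_⟩
      rw [ContinuousLinearMap.sub_apply, ContinuousLinearMap.smul_apply, hd,
        pn_apply_lt e hn, Complex.ofReal_sub, sub_smul]
    · refine ⟨d, ?_⟩
      rw [ContinuousLinearMap.sub_apply, ContinuousLinearMap.smul_apply, hd,
        pn_apply_ge e (not_lt.mp hn), smul_zero, sub_zero]
  have hmin' := hmin (D₁ - (t : ℂ) • P) hDc hDd
  have hCD : C + (D₁ - (t : ℂ) • P) = B - (t : ℂ) • P := (add_sub_assoc C D₁ _).symm
  rw [hCD] at hmin'
  -- decomposition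
  have hPP : P * P = P := pn_idem e N
  have e1 : P * (B - (t:ℂ) • 1) * P = P*B*P - (t:ℂ) • P := by
    rw [mul_sub, mul_smul_comm, mul_one, sub_mul, smul_mul_assoc, hPP]
  have e2 : P*B*Q = P*B - P*B*P := by rw [hQdef, mul_sub, mul_one]
  have e3 : Q*B*P = B*P - P*B*P := by rw [hQdef, sub_mul, one_mul, sub_mul]
  have e4 : Q*B*Q = B - B*P - (P*B - P*B*P) := by
    rw [hQdef]
    simp only [sub_mul, one_mul, mul_sub, mul_one]
    abel
  have hdecomp : B - (t:ℂ) • P = P * (B - (t:ℂ) • 1) * P + P*B*Q + Q*B*P + Q*B*Q := by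
    rw [e1, e2, e3, e4]; abel
  -- norm estimates
  have htr : ‖B - (t:ℂ) • 1‖ ≤ (S - s)/2 := by
    refine norm_translate_le hBsa (by linarith) fun x hx => ?_
    have hx1 : x ≤ S := le_csSup hbdda hx
    have hx2 : s ≤ x := csInf_le hbddb hx
    rw [abs_le, htdef]
    constructor <;> linarith
  have h1 : ‖P * (B - (t:ℂ) • 1) * P‖ ≤ (S - s)/2 := by
    have n1 := norm_mul_le (P * (B - (t:ℂ) • 1)) P
    have n2 := norm_mul_le P (B - (t:ℂ) • 1)
    nlinarith [norm_nonneg (P * (B - (t:ℂ) • 1)), norm_nonneg P,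
      norm_nonneg (B - (t:ℂ) • 1)]
  have h2 : ‖P*B*Q‖ ≤ t/4 := by
    have n1 : ‖P*(B*Q)‖ ≤ ‖P‖ * ‖B*Q‖ := norm_mul_le _ _
    rw [mul_assoc]
    nlinarith [norm_nonneg P, norm_nonneg (B*Q)]
  have h3 : ‖Q*B*P‖ ≤ t/4 := by
    have n1 := norm_mul_le (Q*B) P
    nlinarith [norm_nonneg (Q*B), norm_nonneg P]
  have h4 : ‖Q*B*Q‖ ≤ t/4 := by
    have n1 := norm_mul_le (Q*B) Q
    nlinarith [norm_nonneg (Q*B), norm_nonneg Q]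
  have hfinal : ‖B - (t:ℂ) • P‖ ≤ (S - s)/2 + 3*(t/4) := by
    rw [hdecomp]
    calc ‖P * (B - (t:ℂ) • 1) * P + P*B*Q + Q*B*P + Q*B*Q‖
        ≤ ‖P * (B - (t:ℂ) • 1) * P + P*B*Q + Q*B*P‖ + ‖Q*B*Q‖ := norm_add_le _ _
      _ ≤ (‖P * (B - (t:ℂ) • 1) * P + P*B*Q‖ + ‖Q*B*P‖) + ‖Q*B*Q‖ := by
          gcongr; exact norm_add_le _ _
      _ ≤ ((‖P * (B - (t:ℂ) • 1) * P‖ + ‖P*B*Q‖) + ‖Q*B*P‖) + ‖Q*B*Q‖ := by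
          gcongr; exact norm_add_le _ _
      _ ≤ (S - s)/2 + 3*(t/4) := by linarith
  have hcontr : ‖B‖ ≤ (S - s)/2 + 3*(t/4) := le_trans hmin' hfinal
  rw [htdef] at hcontr
  linarith


end Stmt17Aux

/-- if `C + D₁` is minimal and nonzero then
`λ_min(C+D₁) + λ_max(C+D₁) = 0`. -/
theorem stmt_17 (e : HilbertBasis ℕ ℂ H) (C D₁ : H →L[ℂ] H)
    (hcomp : IsCompactOperator ⇑C) (hsa : IsSelfAdjoint C)
    (hD₁c : IsCompactOperator ⇑D₁) (hD₁ : RealDiag e D₁)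
    (hne : C + D₁ ≠ 0)
    (hmin : ∀ D : H →L[ℂ] H, IsCompactOperator ⇑D → RealDiag e D →
      ‖C + D₁‖ ≤ ‖C + D‖) :
    sInf (spectrum ℝ (C + D₁)) + sSup (spectrum ℝ (C + D₁)) = 0 := by
  have h1 := Stmt17Aux.key e C D₁ hcomp hsa hD₁c hD₁
    (fun D hDc hDd => hmin D hDc hDd)
  have h2 := Stmt17Aux.key e (-C) (-D₁)
    (by simpa using hcomp.neg) hsa.neg (by simpa using hD₁c.neg)
    (fun n => by
      obtain ⟨d, hd⟩ := hD₁ n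
      exact ⟨-d, by rw [ContinuousLinearMap.neg_apply, hd, Complex.ofReal_neg, neg_smul]⟩)
    (fun D hDc hDd => by
      have hDd' : RealDiag e (-D) := fun n => by
        obtain ⟨d, hd⟩ := hDd n
        exact ⟨-d, by rw [ContinuousLinearMap.neg_apply, hd, Complex.ofReal_neg, neg_smul]⟩
      have hDc' : IsCompactOperator ⇑(-D) := by simpa using hDc.neg
      have := hmin (-D) hDc' hDd'
      calc ‖-C + -D₁‖ = ‖C + D₁‖ := by rw [← neg_add, norm_neg]
        _ ≤ ‖C + -D‖ := this
        _ = ‖-C + D‖ := by rw [show -C + D = -(C + -D) by abel, norm_neg])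
  rw [show (-C) + (-D₁) = -(C + D₁) from (neg_add _ _).symm, ← spectrum.neg_eq] at h2
  have hA : sInf (-(spectrum ℝ (C + D₁))) = -sSup (spectrum ℝ (C + D₁)) := by
    rw [Real.sInf_def, neg_neg]
  have hBx : sSup (-(spectrum ℝ (C + D₁))) = -sInf (spectrum ℝ (C + D₁)) := by
    have := Real.sInf_def (spectrum ℝ (C + D₁))
    linarith
  rw [hA, hBx] at h2
  linarith
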